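/- Let s, t ≥ 1 be integers and let R = {−2^i : 0 ≤ i ≤ t} ∪ {2^j : 0 ≤ j ≤ s} ⊆ ℤ (i.e., the recovery set consists of all negative and positive powers of two up to 2^t and 2^s respectively, including ±1). Then for every q ≥ 2, the supremum of R_q(X) over all R-recoverable systems X over alphabets of size q equals 2/3. -/

import Mathlib

/-- An `R`-recoverable system on `ℤ`: every symbol `x_i` is a function of the
symbols in positions `i + R`. -/
def IsRecoverable {Q : Type*} (R : Set ℤ) (X : Set (ℤ → Q)) : Prop :=
  ∀ i : ℤ, ∃ f : (ℤ → Q) → Q,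
    (∀ x y : ℤ → Q, (∀ j ∈ R, x (i + j) = y (i + j)) → f x = f y) ∧
    ∀ x ∈ X, f x = x i

/-- `|B_n(X)|`: the number of restrictions of elements of `X` to `{0, …, n−1}`. -/
noncomputable def blockCount {Q : Type*} (X : Set (ℤ → Q)) (n : ℕ) : ℕ :=
  Nat.card ↥((fun x : ℤ → Q => fun i : Fin n => x ((i : ℕ) : ℤ)) '' X)

/-- The rate `R_q(X) = limsup_{n→∞} (1/n) log_q |B_n(X)|`. -/
noncomputable def rate (q : ℕ) {Q : Type*} (X : Set (ℤ → Q)) : ℝ :=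
  Filter.limsup (fun n : ℕ => Real.logb q (blockCount X n) / n) Filter.atTop


open Filter Finset


lemma three_not_dvd_two_pow (a : ℕ) : ¬ (3:ℤ) ∣ 2 ^ a := by
  intro h
  have h2 : (3:ℤ) ∣ 2 := Int.Prime.dvd_pow' (by norm_num) h
  omega

lemma blockCount_le_pow {Q : Type*} [Fintype Q] (s t : ℕ) (X : Set (ℤ → Q))
    (hX : IsRecoverable {j : ℤ | (∃ i ≤ t, j = -(2 ^ i : ℤ)) ∨ (∃ i ≤ s, j = (2 ^ i : ℤ))} X)
    (n : ℕ) :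
    blockCount X n ≤ Fintype.card Q ^
      (Finset.univ.filter (fun i : Fin n =>
        ¬ (3 ∣ (i : ℕ)) ∨ (i : ℕ) < 2 ^ (max s t) ∨ n ≤ (i : ℕ) + 2 ^ (max s t))).card := by
  classical
  set m := 2 ^ (max s t) with hm
  set T := Finset.univ.filter (fun i : Fin n =>
        ¬ (3 ∣ (i : ℕ)) ∨ (i : ℕ) < m ∨ n ≤ (i : ℕ) + m) with hT
  set B : Set (Fin n → Q) := (fun x : ℤ → Q => fun i : Fin n => x ((i : ℕ) : ℤ)) '' X with hB
  have key : Function.Injective (fun (u : ↥B) (i : {i // i ∈ T}) => u.1 i.1) := by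
    rintro ⟨u, x, hx, rfl⟩ ⟨v, y, hy, rfl⟩ huv
    have huv' : ∀ i : Fin n, i ∈ T → x ((i:ℕ):ℤ) = y ((i:ℕ):ℤ) := fun i hi =>
      congrFun huv ⟨i, hi⟩
    have main : ∀ p : ℤ, 0 ≤ p → p < n → x p = y p := by
      intro p hp0 hpn
      have hfin : p.toNat < n := by omega
      by_cases hPT : (⟨p.toNat, hfin⟩ : Fin n) ∈ T
      · have := huv' _ hPT
        simpa [Int.toNat_of_nonneg hp0] using this
      · simp only [hT, Finset.mem_filter, Finset.mem_univ, true_and, not_or, not_not,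
          not_lt, not_le] at hPT
        obtain ⟨hdvd, hge, hlt⟩ := hPT
        have hdvd' : (3:ℤ) ∣ p := by
          have : (3:ℤ) ∣ (p.toNat : ℤ) := Int.natCast_dvd_natCast.mpr hdvd
          rwa [Int.toNat_of_nonneg hp0] at this
        obtain ⟨f, hf1, hf2⟩ := hX p
        have hagree : ∀ j ∈ {j : ℤ | (∃ i ≤ t, j = -(2 ^ i : ℤ)) ∨ (∃ i ≤ s, j = (2 ^ i : ℤ))},
            x (p + j) = y (p + j) := by
          intro j hj
          have hjdvd : ¬ (3:ℤ) ∣ j := by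
            rcases hj with ⟨a, _, rfl⟩ | ⟨a, _, rfl⟩
            · rw [Int.dvd_neg]; exact three_not_dvd_two_pow a
            · exact three_not_dvd_two_pow a
          have hmz : ((m:ℕ):ℤ) = 2^(max s t) := by push_cast [hm]; ring
          have hjbd : -(m:ℤ) ≤ j ∧ j ≤ (m:ℤ) := by
            rcases hj with ⟨a, ha, rfl⟩ | ⟨a, ha, rfl⟩
            · have h2 : (2:ℤ)^a ≤ 2^(max s t) := pow_le_pow_right₀ (by norm_num)
                (le_trans ha (le_max_right s t))
              have h3 : (0:ℤ) < 2^a := by positivity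
              omega
            · have h2 : (2:ℤ)^a ≤ 2^(max s t) := pow_le_pow_right₀ (by norm_num)
                (le_trans ha (le_max_left s t))
              have h3 : (0:ℤ) < 2^a := by positivity
              omega
          have h0 : 0 ≤ p + j := by omega
          have h1 : p + j < n := by omega
          have hfin2 : (p+j).toNat < n := by omega
          have hmem : (⟨(p+j).toNat, hfin2⟩ : Fin n) ∈ T := by
            simp only [hT, Finset.mem_filter, Finset.mem_univ, true_and]
            left
            intro hc
            have : (3:ℤ) ∣ ((p+j).toNat : ℤ) := Int.natCast_dvd_natCast.mpr hc
            rw [Int.toNat_of_nonneg h0] at this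
            exact hjdvd (by omega)
          have := huv' _ hmem
          simpa [Int.toNat_of_nonneg h0] using this
        calc x p = f x := (hf2 x hx).symm
          _ = f y := hf1 x y hagree
          _ = y p := hf2 y hy
    apply Subtype.ext
    funext i
    exact main _ (Int.natCast_nonneg _) (by exact_mod_cast i.isLt)
  calc blockCount X n = Nat.card ↥B := rfl
    _ ≤ Nat.card ({i // i ∈ T} → Q) := Nat.card_le_card_of_injective _ key
    _ = Fintype.card Q ^ T.card := by
        rw [Nat.card_eq_fintype_card, Fintype.card_fun, Fintype.card_coe]



lemma Tcard_le (n m : ℕ) :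
    (((Finset.univ.filter (fun i : Fin n =>
        ¬ (3 ∣ (i : ℕ)) ∨ (i : ℕ) < m ∨ n ≤ (i : ℕ) + m)).card : ℝ))
      ≤ 2 * n / 3 + (2 * m + 1) := by
  classical
  set A := Finset.univ.filter (fun i : Fin n => ¬ (3 ∣ (i : ℕ))) with hA
  set B := Finset.univ.filter (fun i : Fin n => (i : ℕ) < m)
  set C := Finset.univ.filter (fun i : Fin n => n ≤ (i : ℕ) + m)
  have hsub : (Finset.univ.filter (fun i : Fin n =>
        ¬ (3 ∣ (i : ℕ)) ∨ (i : ℕ) < m ∨ n ≤ (i : ℕ) + m)) ⊆ A ∪ B ∪ C := by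
    intro i hi
    simp only [A, B, C, Finset.mem_union, Finset.mem_filter, Finset.mem_univ, true_and] at hi ⊢
    tauto
  have hcard : (Finset.univ.filter (fun i : Fin n =>
        ¬ (3 ∣ (i : ℕ)) ∨ (i : ℕ) < m ∨ n ≤ (i : ℕ) + m)).card ≤ A.card + B.card + C.card :=
    le_trans (Finset.card_le_card hsub)
      (le_trans (Finset.card_union_le _ _) (by gcongr; exact Finset.card_union_le _ _))
  have hBcard : B.card ≤ m := by
    calc B.card ≤ (Finset.range m).card := Finset.card_le_card_of_injOn (fun i => (i : ℕ))
          (fun i hi => by simp only [B, Finset.mem_coe, Finset.mem_filter] at hi; simp [hi.2])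
          (fun a _ b _ h => Fin.ext h)
      _ = m := Finset.card_range m
  have hCcard : C.card ≤ m := by
    calc C.card ≤ (Finset.Ico (n - m) n).card := Finset.card_le_card_of_injOn (fun i => (i : ℕ))
          (fun i hi => by
            simp only [C, Finset.mem_coe, Finset.mem_filter, Finset.mem_univ, true_and] at hi
            simp only [Finset.mem_coe, Finset.mem_Ico]
            exact ⟨by omega, i.isLt⟩)
          (fun a _ b _ h => Fin.ext h)
      _ ≤ m := by rw [Nat.card_Ico]; omega
  have hAc : (Finset.univ.filter (fun i : Fin n => (3 ∣ (i : ℕ)))).card + A.card = n := by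
    rw [hA, Finset.card_filter_add_card_filter_not (p := fun i : Fin n => (3 ∣ (i : ℕ)))]
    simp
  have hmult : n / 3 ≤ (Finset.univ.filter (fun i : Fin n => (3 ∣ (i : ℕ)))).card := by
    have hcardeq : (Finset.univ.filter (fun i : Fin n => (3 ∣ (i : ℕ)))).card
        = ((Finset.range n).filter (fun i => 3 ∣ i)).card := by
      refine Finset.card_nbij (i := fun i : Fin n => (i : ℕ)) ?_ ?_ ?_
      · intro a ha
        simp only [Finset.mem_coe, Finset.mem_filter, Finset.mem_univ, true_and] at ha
        simp [Finset.mem_filter, Finset.mem_range, a.isLt, ha]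
      · intro a _ b _ h; exact Fin.ext h
      · intro b hb
        simp only [Finset.coe_filter, Finset.mem_range, Set.mem_setOf_eq] at hb
        exact ⟨⟨b, hb.1⟩, by simp [Finset.mem_filter, hb.2], rfl⟩
    rw [hcardeq]
    calc n / 3 = ((Finset.range (n/3)).image (fun k => 3 * k)).card := by
          rw [Finset.card_image_of_injective _ (fun a b h => by omega), Finset.card_range]
      _ ≤ _ := Finset.card_le_card (by
          intro b hb
          simp only [Finset.mem_image, Finset.mem_range] at hb
          obtain ⟨k, hk, rfl⟩ := hb
          simp only [Finset.mem_filter, Finset.mem_range]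
          exact ⟨by omega, ⟨k, rfl⟩⟩)
  have key : 3 * (Finset.univ.filter (fun i : Fin n =>
        ¬ (3 ∣ (i : ℕ)) ∨ (i : ℕ) < m ∨ n ≤ (i : ℕ) + m)).card ≤ 2*n + 2 + 6*m := by
    omega
  have keyR := (Nat.cast_le (α := ℝ)).mpr key
  push_cast at keyR
  linarith

lemma logb_nat_nonneg {q : ℕ} (hq : 2 ≤ q) (k : ℕ) : 0 ≤ Real.logb q k := by
  rcases Nat.eq_zero_or_pos k with rfl | hk
  · simp
  · exact Real.logb_nonneg (by exact_mod_cast hq) (by exact_mod_cast hk)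

lemma logb_blockCount_le {Q : Type*} [Fintype Q] {q : ℕ} (hq : 2 ≤ q)
    (hcard : Fintype.card Q = q) (s t : ℕ) (X : Set (ℤ → Q))
    (hX : IsRecoverable {j : ℤ | (∃ i ≤ t, j = -(2 ^ i : ℤ)) ∨ (∃ i ≤ s, j = (2 ^ i : ℤ))} X)
    (n : ℕ) :
    Real.logb q (blockCount X n) ≤ 2 * n / 3 + (2 * 2 ^ (max s t) + 1) := by
  have hq1 : (1:ℝ) < q := by exact_mod_cast hq
  set k := (Finset.univ.filter (fun i : Fin n =>
        ¬ (3 ∣ (i : ℕ)) ∨ (i : ℕ) < 2 ^ (max s t) ∨ n ≤ (i : ℕ) + 2 ^ (max s t))).card with hk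
  have hT := Tcard_le n (2 ^ (max s t))
  rcases Nat.eq_zero_or_pos (blockCount X n) with h0 | h0
  · rw [h0]
    simp only [Nat.cast_zero, Real.logb_zero]
    positivity
  · have hle : ((blockCount X n : ℝ)) ≤ (q:ℝ) ^ k := by
      have := blockCount_le_pow s t X hX n
      rw [hcard] at this
      exact_mod_cast this
    calc Real.logb q (blockCount X n) ≤ Real.logb q ((q:ℝ) ^ k) :=
          Real.logb_le_logb_of_le hq1 (by exact_mod_cast h0) hle
      _ = k := by
          rw [Real.logb_pow, Real.logb_self_eq_one (by linarith), mul_one]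
      _ ≤ 2 * n / 3 + (2 * 2 ^ (max s t) + 1) := by exact_mod_cast hT

lemma rate_le_two_thirds {Q : Type*} [Fintype Q] {q : ℕ} (hq : 2 ≤ q)
    (hcard : Fintype.card Q = q) (s t : ℕ) (X : Set (ℤ → Q))
    (hX : IsRecoverable {j : ℤ | (∃ i ≤ t, j = -(2 ^ i : ℤ)) ∨ (∃ i ≤ s, j = (2 ^ i : ℤ))} X) :
    rate q X ≤ 2 / 3 := by
  set c : ℝ := 2 * 2 ^ (max s t) + 1 with hc
  have hcpos : 0 ≤ c := by positivity
  set g : ℕ → ℝ := fun n => Real.logb q (blockCount X n) / n with hg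
  set h : ℕ → ℝ := fun n => 2/3 + c / n with hh
  have hev : ∀ᶠ n in atTop, g n ≤ h n := by
    filter_upwards [eventually_ge_atTop 1] with n hn
    have hnpos : (0:ℝ) < n := by exact_mod_cast hn
    have hb := logb_blockCount_le hq hcard s t X hX n
    push_cast at hb
    have h2 : g n ≤ (2 * n / 3 + c) / n := by
      show Real.logb q (blockCount X n) / (n:ℝ) ≤ _
      gcongr
    calc g n ≤ (2 * n / 3 + c) / n := h2
      _ = 2/3 + c / n := by field_simp
  have hg0 : ∀ n, 0 ≤ g n := fun n =>
    div_nonneg (logb_nat_nonneg hq _) (by positivity)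
  have hco : IsCoboundedUnder (· ≤ ·) atTop g :=
    IsBoundedUnder.isCoboundedUnder_le ⟨0, by
      rw [eventually_map]; exact Eventually.of_forall hg0⟩
  have htend : Tendsto h atTop (nhds (2/3 : ℝ)) := by
    have h1 : Tendsto (fun n : ℕ => c / n) atTop (nhds 0) :=
      Tendsto.div_atTop tendsto_const_nhds tendsto_natCast_atTop_atTop
    have := tendsto_const_nhds.add h1 (f := fun _ : ℕ => (2/3:ℝ)) (x := atTop)
    simpa using this
  calc rate q X ≤ limsup h atTop := limsup_le_limsup hev hco htend.isBoundedUnder_le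
    _ = 2/3 := htend.limsup_eq

/-- the model system -/
def sysX (q : ℕ) : Set (ℤ → ZMod q) :=
  {x | ∀ k : ℤ, x (3*k) = x (3*k-1) + x (3*k+1)}

lemma sysX_recoverable (q s t : ℕ) (hs : 1 ≤ s) (ht : 1 ≤ t) :
    IsRecoverable {j : ℤ | (∃ i ≤ t, j = -(2 ^ i : ℤ)) ∨ (∃ i ≤ s, j = (2 ^ i : ℤ))}
      (sysX q) := by
  intro i
  have h3 : i % 3 = 0 ∨ i % 3 = 1 ∨ i % 3 = 2 := by omega
  have hm1 : (-1 : ℤ) ∈ {j : ℤ | (∃ i ≤ t, j = -(2 ^ i : ℤ)) ∨ (∃ i ≤ s, j = (2 ^ i : ℤ))} :=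
    Or.inl ⟨0, Nat.zero_le t, by norm_num⟩
  have hp1 : (1 : ℤ) ∈ {j : ℤ | (∃ i ≤ t, j = -(2 ^ i : ℤ)) ∨ (∃ i ≤ s, j = (2 ^ i : ℤ))} :=
    Or.inr ⟨0, Nat.zero_le s, by norm_num⟩
  have hm2 : (-2 : ℤ) ∈ {j : ℤ | (∃ i ≤ t, j = -(2 ^ i : ℤ)) ∨ (∃ i ≤ s, j = (2 ^ i : ℤ))} :=
    Or.inl ⟨1, ht, by norm_num⟩
  have hp2 : (2 : ℤ) ∈ {j : ℤ | (∃ i ≤ t, j = -(2 ^ i : ℤ)) ∨ (∃ i ≤ s, j = (2 ^ i : ℤ))} :=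
    Or.inr ⟨1, hs, by norm_num⟩
  rcases h3 with h | h | h
  · refine ⟨fun x => x (i + -1) + x (i + 1), fun x y hxy => by beta_reduce; rw [hxy _ hm1, hxy _ hp1],
      fun x hx => ?_⟩
    obtain ⟨k, rfl⟩ : ∃ k, i = 3 * k := ⟨i / 3, by omega⟩
    have := hx k
    beta_reduce
    rw [show 3*k + -1 = 3*k - 1 by ring, show (3:ℤ)*k + 1 = 3*k+1 by ring, ← this]
  · refine ⟨fun x => x (i + -1) - x (i + -2), fun x y hxy => by beta_reduce; rw [hxy _ hm1, hxy _ hm2],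
      fun x hx => ?_⟩
    obtain ⟨k, rfl⟩ : ∃ k, i = 3 * k + 1 := ⟨i / 3, by omega⟩
    have := hx k
    beta_reduce
    rw [show 3*k + 1 + -1 = 3*k by ring, show (3:ℤ)*k + 1 + -2 = 3*k - 1 by ring, this]
    ring
  · refine ⟨fun x => x (i + 1) - x (i + 2), fun x y hxy => by beta_reduce; rw [hxy _ hp1, hxy _ hp2],
      fun x hx => ?_⟩
    obtain ⟨k, rfl⟩ : ∃ k, i = 3 * k + 2 := ⟨i / 3, by omega⟩
    have := hx (k + 1)
    beta_reduce
    rw [show 3*k + 2 + 1 = 3*(k+1) by ring, show (3:ℤ)*k + 2 + 2 = 3*(k+1) + 1 by ring, this]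
    rw [show (3:ℤ)*(k+1) - 1 = 3*k + 2 by ring]
    ring

lemma pow_le_blockCount_sysX (q : ℕ) [NeZero q] (n : ℕ) :
    q ^ (Finset.univ.filter (fun i : Fin n => ¬ (3 ∣ (i : ℕ)))).card
      ≤ blockCount (sysX q) n := by
  classical
  set F := Finset.univ.filter (fun i : Fin n => ¬ (3 ∣ (i : ℕ))) with hF
  set B : Set (Fin n → ZMod q) :=
    (fun x : ℤ → ZMod q => fun i : Fin n => x ((i : ℕ) : ℤ)) '' (sysX q) with hB
  have hmemF : ∀ (p : ℤ), 0 ≤ p → p < n → ¬ ((3:ℤ) ∣ p) → ∀ h : p.toNat < n,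
      (⟨p.toNat, h⟩ : Fin n) ∈ F := by
    intro p h0 h1 h2 h
    simp only [hF, Finset.mem_filter, Finset.mem_univ, true_and]
    intro hc
    have : (3:ℤ) ∣ (p.toNat : ℤ) := Int.natCast_dvd_natCast.mpr hc
    rw [Int.toNat_of_nonneg h0] at this
    exact h2 this
  set y : ({i // i ∈ F} → ZMod q) → ℤ → ZMod q := fun u p =>
    if h : 0 ≤ p ∧ p < n ∧ ¬ ((3:ℤ) ∣ p) then
      u ⟨⟨p.toNat, by omega⟩, hmemF p h.1 h.2.1 h.2.2 (by omega)⟩ else 0 with hy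
  set e : ({i // i ∈ F} → ZMod q) → ℤ → ZMod q := fun u p =>
    if (3:ℤ) ∣ p then y u (p-1) + y u (p+1) else y u p with he
  have heX : ∀ u, e u ∈ sysX q := by
    intro u k
    simp only [he]
    rw [if_pos ⟨k, rfl⟩, if_neg (by omega), if_neg (by omega)]
  have hΦ : Function.Injective
      (fun (u : {i // i ∈ F} → ZMod q) => (⟨fun i : Fin n => e u ((i:ℕ):ℤ), e u, heX u, rfl⟩ : ↥B)) := by
    intro u v huv
    have huv' : ∀ i : Fin n, e u ((i:ℕ):ℤ) = e v ((i:ℕ):ℤ) := by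
      intro i
      exact congrFun (congrArg Subtype.val huv) i
    funext i
    obtain ⟨i, hi⟩ := i
    have hnd : ¬ ((3:ℤ) ∣ ((i:ℕ):ℤ)) := by
      simp only [hF, Finset.mem_filter, Finset.mem_univ, true_and] at hi
      exact fun hc => hi (Int.natCast_dvd_natCast.mp hc)
    have hcond : (0:ℤ) ≤ ((i:ℕ):ℤ) ∧ ((i:ℕ):ℤ) < n ∧ ¬ ((3:ℤ) ∣ ((i:ℕ):ℤ)) :=
      ⟨Int.natCast_nonneg _, by exact_mod_cast i.isLt, hnd⟩
    have key := huv' i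
    simp only [he, if_neg hnd, hy, dif_pos hcond] at key
    have hidx : ∀ (w : {i // i ∈ F} → ZMod q),
        w ⟨⟨((i:ℕ):ℤ).toNat, by omega⟩, hmemF _ hcond.1 hcond.2.1 hcond.2.2 (by omega)⟩
          = w ⟨i, hi⟩ := by
      intro w
      exact congrArg w (Subtype.ext (Fin.ext (by simp)))
    rwa [hidx u, hidx v] at key
  have hcount := Nat.card_le_card_of_injective _ hΦ
  calc q ^ F.card = Nat.card ({i // i ∈ F} → ZMod q) := by
        rw [Nat.card_eq_fintype_card, Fintype.card_fun, Fintype.card_coe, ZMod.card]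
    _ ≤ Nat.card ↥B := hcount
    _ = blockCount (sysX q) n := rfl

lemma Fcard_ge (n : ℕ) :
    2 * (n:ℝ) / 3 - 1 ≤ ((Finset.univ.filter (fun i : Fin n => ¬ (3 ∣ (i : ℕ)))).card : ℝ) := by
  classical
  have hAc : (Finset.univ.filter (fun i : Fin n => (3 ∣ (i : ℕ)))).card
      + (Finset.univ.filter (fun i : Fin n => ¬ (3 ∣ (i : ℕ)))).card = n := by
    rw [Finset.card_filter_add_card_filter_not (p := fun i : Fin n => (3 ∣ (i : ℕ)))]
    simp
  have hmult : (Finset.univ.filter (fun i : Fin n => (3 ∣ (i : ℕ)))).card ≤ n / 3 + 1 := by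
    calc (Finset.univ.filter (fun i : Fin n => (3 ∣ (i : ℕ)))).card
        ≤ (Finset.range (n/3 + 1)).card := Finset.card_le_card_of_injOn (fun i => (i : ℕ) / 3)
          (fun i hi => by
            simp only [Finset.mem_coe, Finset.mem_filter] at hi
            have := i.isLt
            simp only [Finset.mem_coe, Finset.mem_range]
            omega)
          (fun a ha b hb h => by
            simp only [Finset.mem_coe, Finset.mem_filter, Finset.mem_univ, true_and] at ha hb
            simp only at h
            exact Fin.ext (by omega))
      _ = n / 3 + 1 := Finset.card_range _
  have key : 3 * n ≤ 3 * (Finset.univ.filter (fun i : Fin n => ¬ (3 ∣ (i : ℕ)))).card + n + 3 := by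
    omega
  have keyR := (Nat.cast_le (α := ℝ)).mpr key
  push_cast at keyR
  linarith


lemma rate_sysX (q s t : ℕ) (hq : 2 ≤ q) (hs : 1 ≤ s) (ht : 1 ≤ t) :
    rate q (sysX q) = 2 / 3 := by
  haveI : NeZero q := ⟨by omega⟩
  have hq1 : (1:ℝ) < q := by exact_mod_cast hq
  set c : ℝ := 2 * 2 ^ (max s t) + 1 with hc
  set g : ℕ → ℝ := fun n => Real.logb q (blockCount (sysX q) n) / n with hg
  have hevup : ∀ᶠ n : ℕ in atTop, g n ≤ 2/3 + c / (n:ℝ) := by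
    filter_upwards [eventually_ge_atTop 1] with n hn
    have hnpos : (0:ℝ) < n := by exact_mod_cast hn
    have hb := logb_blockCount_le hq (ZMod.card q) s t (sysX q)
      (sysX_recoverable q s t hs ht) n
    push_cast at hb
    have h2 : g n ≤ (2 * n / 3 + c) / n := by
      show Real.logb q (blockCount (sysX q) n) / (n:ℝ) ≤ _
      gcongr
    calc g n ≤ (2 * n / 3 + c) / n := h2
      _ = 2/3 + c / n := by field_simp
  have hevlow : ∀ᶠ n : ℕ in atTop, 2/3 - 1 / (n:ℝ) ≤ g n := by
    filter_upwards [eventually_ge_atTop 1] with n hn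
    have hnpos : (0:ℝ) < n := by exact_mod_cast hn
    have hF := Fcard_ge n
    have hbc := pow_le_blockCount_sysX q n
    set k := (Finset.univ.filter (fun i : Fin n => ¬ (3 ∣ (i : ℕ)))).card
    have hlogb : (k:ℝ) ≤ Real.logb q (blockCount (sysX q) n) := by
      have h1 : Real.logb q ((q:ℝ) ^ k) ≤ Real.logb q (blockCount (sysX q) n) :=
        Real.logb_le_logb_of_le hq1 (by positivity) (by exact_mod_cast hbc)
      rwa [Real.logb_pow, Real.logb_self_eq_one (by linarith), mul_one] at h1
    have h2 : (2 * (n:ℝ) / 3 - 1) / n ≤ g n := by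
      show _ ≤ Real.logb q (blockCount (sysX q) n) / (n:ℝ)
      gcongr
      linarith
    calc 2/3 - 1 / (n:ℝ) = (2 * (n:ℝ) / 3 - 1) / n := by field_simp
      _ ≤ g n := h2
  have hlow : Tendsto (fun n : ℕ => 2/3 - 1/(n:ℝ)) atTop (nhds (2/3 : ℝ)) := by
    have h1 : Tendsto (fun n : ℕ => 1 / (n:ℝ)) atTop (nhds 0) :=
      Tendsto.div_atTop tendsto_const_nhds tendsto_natCast_atTop_atTop
    have hconst : Tendsto (fun _ : ℕ => (2/3:ℝ)) atTop (nhds (2/3)) := tendsto_const_nhds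
    simpa using hconst.sub h1
  have hup : Tendsto (fun n : ℕ => 2/3 + c/(n:ℝ)) atTop (nhds (2/3 : ℝ)) := by
    have h1 : Tendsto (fun n : ℕ => c / (n:ℝ)) atTop (nhds 0) :=
      Tendsto.div_atTop tendsto_const_nhds tendsto_natCast_atTop_atTop
    have := tendsto_const_nhds.add h1 (f := fun _ : ℕ => (2/3:ℝ)) (x := atTop)
    simpa using this
  have hgtend : Tendsto g atTop (nhds (2/3 : ℝ)) :=
    tendsto_of_tendsto_of_tendsto_of_le_of_le' hlow hup hevlow hevup
  exact hgtend.limsup_eq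

theorem stmt10 (s t : ℕ) (hs : 1 ≤ s) (ht : 1 ≤ t) (q : ℕ) (hq : 2 ≤ q) :
    sSup {x : ℝ | ∃ (Q : Type) (_ : Fintype Q), Fintype.card Q = q ∧
        ∃ X : Set (ℤ → Q),
          IsRecoverable
            {j : ℤ | (∃ i ≤ t, j = -(2 ^ i : ℤ)) ∨ (∃ i ≤ s, j = (2 ^ i : ℤ))} X ∧
          rate q X = x} =
      2 / 3 := by
  haveI : NeZero q := ⟨by omega⟩
  have hmem : (2/3 : ℝ) ∈ {x : ℝ | ∃ (Q : Type) (_ : Fintype Q), Fintype.card Q = q ∧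
        ∃ X : Set (ℤ → Q),
          IsRecoverable
            {j : ℤ | (∃ i ≤ t, j = -(2 ^ i : ℤ)) ∨ (∃ i ≤ s, j = (2 ^ i : ℤ))} X ∧
          rate q X = x} :=
    ⟨ZMod q, inferInstance, ZMod.card q, sysX q, sysX_recoverable q s t hs ht,
      rate_sysX q s t hq hs ht⟩
  have hub : ∀ x ∈ {x : ℝ | ∃ (Q : Type) (_ : Fintype Q), Fintype.card Q = q ∧
        ∃ X : Set (ℤ → Q),
          IsRecoverable
            {j : ℤ | (∃ i ≤ t, j = -(2 ^ i : ℤ)) ∨ (∃ i ≤ s, j = (2 ^ i : ℤ))} X ∧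
          rate q X = x}, x ≤ 2/3 := by
    rintro x ⟨Q, hQ, hcard, X, hrec, rfl⟩
    exact rate_le_two_thirds hq hcard s t X hrec
  exact le_antisymm (csSup_le ⟨_, hmem⟩ hub) (le_csSup ⟨2/3, fun x hx => hub x hx⟩ hmem)
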